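/- Suppose x_1,...,x_{d-1} ∈ R^d, and a unit vector ŵ satisfies both ŵᵀ(x_i + c₄e₁/√d) > 0 and ŵᵀ(x_i − c₄e₁/√d) < 0 for every i = 1,...,d−1. Then ∑_{i=1}^{d-1} (ŵᵀx_i)² ≤ c₄². -/

import Mathlib

/-- If a unit vector `ŵ` satisfies `ŵᵀ(xᵢ + c₄ e₁/√d) > 0` and `ŵᵀ(xᵢ - c₄ e₁/√d) < 0`
for every `i = 1,…,d-1`, then `∑ᵢ (ŵᵀ xᵢ)² ≤ c₄²`. -/
theorem separator_is_approximate_null_vector (d : ℕ) (hd : 0 < d)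
    (x : Fin (d - 1) → EuclideanSpace ℝ (Fin d))
    (w : EuclideanSpace ℝ (Fin d)) (hw : ‖w‖ = 1)
    (c₄ : ℝ) (hc₄ : 0 < c₄)
    (hsep : ∀ i,
      0 < (inner ℝ w (x i + (c₄ / Real.sqrt d) •
            EuclideanSpace.single (⟨0, hd⟩ : Fin d) (1 : ℝ)) : ℝ) ∧
      (inner ℝ w (x i - (c₄ / Real.sqrt d) •
            EuclideanSpace.single (⟨0, hd⟩ : Fin d) (1 : ℝ)) : ℝ) < 0) :
    ∑ i, (inner ℝ w (x i) : ℝ) ^ 2 ≤ c₄ ^ 2 := by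
  set e : EuclideanSpace ℝ (Fin d) := EuclideanSpace.single (⟨0, hd⟩ : Fin d) (1 : ℝ)
  set s : ℝ := c₄ / Real.sqrt d
  set a : ℝ := inner ℝ w e with ha
  have he : ‖e‖ = 1 := by simp [e]
  have ha1 : |a| ≤ 1 := by
    calc |a| ≤ ‖w‖ * ‖e‖ := abs_real_inner_le_norm w e
    _ = 1 := by rw [hw, he]; ring
  have key : ∀ i, |(inner ℝ w (x i) : ℝ)| ≤ s * a := by
    intro i
    obtain ⟨h1, h2⟩ := hsep i
    rw [inner_add_right, inner_smul_right] at h1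
    rw [inner_sub_right, inner_smul_right] at h2
    rw [abs_le]
    constructor <;> linarith
  have hdpos : (0:ℝ) < Real.sqrt d := Real.sqrt_pos.mpr (by exact_mod_cast hd)
  have hsum : ∑ i, (inner ℝ w (x i) : ℝ) ^ 2 ≤ (d - 1 : ℕ) * (s * a) ^ 2 := by
    calc ∑ i, (inner ℝ w (x i) : ℝ) ^ 2 ≤ ∑ _i : Fin (d-1), (s * a) ^ 2 := by
          apply Finset.sum_le_sum
          intro i _
          have := key i
          have := sq_abs (inner ℝ w (x i) : ℝ)
          nlinarith [abs_nonneg (inner ℝ w (x i) : ℝ)]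
    _ = (d - 1 : ℕ) * (s * a) ^ 2 := by simp
  have hs2 : s ^ 2 = c₄ ^ 2 / d := by
    rw [div_pow, Real.sq_sqrt (by positivity : (0:ℝ) ≤ (d:ℝ))]
  have ha2 : a ^ 2 ≤ 1 := by nlinarith [sq_abs a, abs_nonneg a]
  have hd1 : ((d - 1 : ℕ) : ℝ) ≤ (d : ℝ) := by
    have : (d - 1 : ℕ) ≤ d := Nat.sub_le d 1
    exact_mod_cast this
  have hdR : (0:ℝ) < (d:ℝ) := by exact_mod_cast hd
  calc ∑ i, (inner ℝ w (x i) : ℝ) ^ 2 ≤ (d - 1 : ℕ) * (s * a) ^ 2 := hsum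
    _ = (d - 1 : ℕ) * (c₄ ^ 2 / d * a ^ 2) := by rw [mul_pow, hs2]
    _ ≤ (d : ℝ) * (c₄ ^ 2 / d * 1) := by
        apply mul_le_mul hd1 ?_ (by positivity) (by positivity)
        apply mul_le_mul_of_nonneg_left ha2 (by positivity)
    _ = c₄ ^ 2 := by field_simp
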